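/- Let q : R → C be integrable, of bounded variation, supported in Ω = [-T_-,T_+], and vanishing at the endpoints of Ω. Set D = ½‖q‖_∞ + ‖q‖_1 + ½‖∂_t q‖_1. Then for every ζ in the closed upper half-plane, |∫_{-T_-}^{t} q*(y) e^{2iζ(t-y)} dy| ≤ D/(1+|ζ|) for all t ∈ Ω. -/

import Mathlib

open MeasureTheory Complex Set
open scoped ENNReal

private lemma Phi2_aux (Tm Tp : ℝ)
    (q q' : ℝ → ℂ) (hq : Integrable q) (hq' : Integrable q')
    (hrep : ∀ t : ℝ, q t = ∫ s in (-Tm)..t, q' s)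
    (M : ℝ) (hqsup : ∀ u : ℝ, ‖q u‖ ≤ M)
    (ζ : ℂ) (hζim : 0 ≤ ζ.im) (t : ℝ) (ht1 : -Tm ≤ t)
    (c : ℂ) (hc : c = 2 * Complex.I * ζ)
    (A : Set ℝ) (hA : A = Ioc (-Tm) t)
    (hre : ∀ y : ℝ, (c * ((t : ℂ) - y)).re = -2 * ζ.im * (t - y))
    (hEnorm : ∀ y : ℝ, y ≤ t → ‖Complex.exp (c * ((t : ℂ) - y))‖ ≤ 1)
    (hEcont : Continuous fun y : ℝ => Complex.exp (c * ((t : ℂ) - y)))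
    (hζ0 : ζ ≠ 0) :
      ‖ζ‖ * ‖∫ y in (-Tm)..t, (starRingEnd ℂ) (q y) * Complex.exp (c * ((t : ℂ) - y))‖
        ≤ (1/2) * M + (1/2) * ∫ u, ‖q' u‖ := by
  subst hA
  have hcne : c ≠ 0 := by
    rw [hc]
    exact mul_ne_zero (mul_ne_zero two_ne_zero Complex.I_ne_zero) hζ0
  have hcabs : ‖c‖ = 2 * ‖ζ‖ := by
    rw [hc, norm_mul, norm_mul]; simp
  haveI hfin : IsFiniteMeasure (volume.restrict (Ioc (-Tm) t)) :=
    ⟨by rw [Measure.restrict_apply_univ]; exact measure_Ioc_lt_top⟩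
  -- conj of q as integral
  have hconj : ∀ y : ℝ, -Tm ≤ y →
      (starRingEnd ℂ) (q y) = ∫ s in Ioc (-Tm) y, (starRingEnd ℂ) (q' s) := by
    intro y hy
    rw [hrep y, intervalIntegral.integral_of_le hy, ← integral_conj]
  -- integrability of conj q' * exp on the strip
  have hq'conj : Integrable (fun s : ℝ => (starRingEnd ℂ) (q' s)) volume := by
    apply Integrable.mono' hq'.norm
      (RCLike.continuous_conj.comp_aestronglyMeasurable hq'.aestronglyMeasurable)
    exact Filter.Eventually.of_forall fun s => by rw [RCLike.norm_conj]
  have hJint : IntegrableOn (fun s : ℝ => (starRingEnd ℂ) (q' s) * Complex.exp (c * ((t:ℂ) - s)))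
      (Ioc (-Tm) t) volume := by
    apply Integrable.mono' (g := fun s => ‖q' s‖) (hq'.norm.restrict)
    · exact (hq'conj.aestronglyMeasurable.mul hEcont.aestronglyMeasurable).restrict
    · filter_upwards [ae_restrict_mem measurableSet_Ioc] with s hs
      rw [norm_mul, RCLike.norm_conj]
      exact mul_le_of_le_one_right (norm_nonneg _) (hEnorm s hs.2)
  set J : ℂ := ∫ s in Ioc (-Tm) t, (starRingEnd ℂ) (q' s) * Complex.exp (c * ((t:ℂ) - s)) with hJ
  -- product integrability
  have hS : MeasurableSet {p : ℝ × ℝ | p.2 ≤ p.1} := measurableSet_le measurable_snd measurable_fst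
  have hFeq : (Function.uncurry fun (y s : ℝ) =>
        (Iic y).indicator (fun s' => (starRingEnd ℂ) (q' s') * Complex.exp (c * ((t:ℂ) - y))) s)
      = ({p : ℝ × ℝ | p.2 ≤ p.1}).indicator
        (fun p => (starRingEnd ℂ) (q' p.2) * Complex.exp (c * ((t:ℂ) - p.1))) := by
    funext p
    rcases p with ⟨y, s⟩
    by_cases h : s ≤ y
    · simp [Function.uncurry, Set.indicator_of_mem, h, Set.mem_Iic, Set.mem_setOf_eq]
    · simp [Function.uncurry, Set.indicator_of_notMem, h, Set.mem_Iic, Set.mem_setOf_eq]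
  have hFint : Integrable (Function.uncurry fun (y s : ℝ) =>
        (Iic y).indicator (fun s' => (starRingEnd ℂ) (q' s') * Complex.exp (c * ((t:ℂ) - y))) s)
      ((volume.restrict (Ioc (-Tm) t)).prod (volume.restrict (Ioc (-Tm) t))) := by
    rw [hFeq]
    have haesm : AEStronglyMeasurable
        (fun p : ℝ × ℝ => (starRingEnd ℂ) (q' p.2) * Complex.exp (c * ((t:ℂ) - p.1)))
        ((volume.restrict (Ioc (-Tm) t)).prod (volume.restrict (Ioc (-Tm) t))) := by
      exact ((hq'conj.restrict.aestronglyMeasurable).comp_snd).mul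
        ((hEcont.comp continuous_fst).aestronglyMeasurable)
    apply Integrable.mono' (g := fun p : ℝ × ℝ => ‖q' p.2‖) ?_ (haesm.indicator hS)
    · rw [Measure.prod_restrict]
      filter_upwards [ae_restrict_mem (measurableSet_Ioc.prod measurableSet_Ioc)] with p hp
      by_cases h : p ∈ {p : ℝ × ℝ | p.2 ≤ p.1}
      · rw [Set.indicator_of_mem h, norm_mul, RCLike.norm_conj]
        exact mul_le_of_le_one_right (norm_nonneg _) (hEnorm _ hp.1.2)
      · rw [Set.indicator_of_notMem h]
        simp [norm_nonneg]
    · have h1 : Integrable (fun p : ℝ × ℝ => (1:ℝ) * ‖q' p.2‖)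
          ((volume.restrict (Ioc (-Tm) t)).prod (volume.restrict (Ioc (-Tm) t))) :=
        (integrable_const (1:ℝ)).mul_prod hq'.norm.restrict
      simpa using h1
  -- key identity
  have key : (∫ y in Ioc (-Tm) t, (starRingEnd ℂ) (q y) * Complex.exp (c * ((t:ℂ) - y)))
      = ∫ s in Ioc (-Tm) t,
          (starRingEnd ℂ) (q' s) * ((Complex.exp (c * ((t:ℂ) - s)) - 1) / c) := by
    have L1 : (∫ y in Ioc (-Tm) t, (starRingEnd ℂ) (q y) * Complex.exp (c * ((t:ℂ) - y)))
        = ∫ y in Ioc (-Tm) t, ∫ s in Ioc (-Tm) t,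
            (Iic y).indicator (fun s' => (starRingEnd ℂ) (q' s') * Complex.exp (c * ((t:ℂ) - y))) s := by
      apply setIntegral_congr_fun measurableSet_Ioc
      intro y hy
      dsimp only
      have hset : Iic y ∩ Ioc (-Tm) t = Ioc (-Tm) y := by
        ext s
        simp only [mem_inter_iff, mem_Iic, mem_Ioc]
        constructor
        · rintro ⟨h1, h2, h3⟩; exact ⟨h2, h1⟩
        · rintro ⟨h1, h2⟩; exact ⟨h2, h1, h2.trans hy.2⟩
      rw [hconj y hy.1.le, ← integral_mul_const,
        integral_indicator measurableSet_Iic, Measure.restrict_restrict measurableSet_Iic, hset]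
    have L4 := MeasureTheory.integral_integral_swap
      (μ := volume.restrict (Ioc (-Tm) t)) (ν := volume.restrict (Ioc (-Tm) t)) hFint
    have L5 : (∫ s in Ioc (-Tm) t, ∫ y in Ioc (-Tm) t,
          (Iic y).indicator (fun s' => (starRingEnd ℂ) (q' s') * Complex.exp (c * ((t:ℂ) - y))) s)
        = ∫ s in Ioc (-Tm) t,
            (starRingEnd ℂ) (q' s) * ((Complex.exp (c * ((t:ℂ) - s)) - 1) / c) := by
      apply setIntegral_congr_fun measurableSet_Ioc
      intro s hs
      dsimp only
      have hswap : ∀ y : ℝ,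
          (Iic y).indicator (fun s' => (starRingEnd ℂ) (q' s') * Complex.exp (c * ((t:ℂ) - y))) s
          = (Ici s).indicator (fun y' => (starRingEnd ℂ) (q' s) * Complex.exp (c * ((t:ℂ) - y'))) y := by
        intro y
        by_cases h : s ≤ y
        · rw [Set.indicator_of_mem (mem_Iic.mpr h), Set.indicator_of_mem (mem_Ici.mpr h)]
        · rw [Set.indicator_of_notMem (fun hh => h (mem_Iic.mp hh)),
            Set.indicator_of_notMem (fun hh => h (mem_Ici.mp hh))]
      have hset2 : Ici s ∩ Ioc (-Tm) t = Icc s t := by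
        ext y
        simp only [mem_inter_iff, mem_Ici, mem_Ioc, mem_Icc]
        constructor
        · rintro ⟨h1, h2, h3⟩; exact ⟨h1, h3⟩
        · rintro ⟨h1, h2⟩; exact ⟨h1, hs.1.trans_le h1, h2⟩
      simp only [hswap]
      rw [integral_indicator measurableSet_Ici, Measure.restrict_restrict measurableSet_Ici,
        hset2, integral_Icc_eq_integral_Ioc, integral_const_mul]
      congr 1
      -- compute the exponential integral
      rw [← intervalIntegral.integral_of_le hs.2]
      have hcomp : ∀ y : ℝ, Complex.exp (c * ((t:ℂ) - y)) =
          Complex.exp (c * t) * Complex.exp ((-c) * y) := by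
        intro y
        rw [← Complex.exp_add]
        ring_nf
      calc (∫ y in s..t, Complex.exp (c * ((t:ℂ) - y)))
          = ∫ y in s..t, Complex.exp (c * t) * Complex.exp ((-c) * y) := by
            simp only [hcomp]
        _ = Complex.exp (c * t) * ∫ y in s..t, Complex.exp ((-c) * y) := by
            rw [intervalIntegral.integral_const_mul]
        _ = Complex.exp (c * t) *
              ((Complex.exp ((-c) * t) - Complex.exp ((-c) * s)) / (-c)) := by
            rw [integral_exp_mul_complex (neg_ne_zero.mpr hcne)]
        _ = (Complex.exp (c * ((t:ℂ) - s)) - 1) / c := by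
            have e1 : Complex.exp (c * t) * Complex.exp ((-c) * t) = 1 := by
              rw [← Complex.exp_add]
              simp
            have e2 : Complex.exp (c * t) * Complex.exp ((-c) * s) =
                Complex.exp (c * ((t:ℂ) - s)) := by
              rw [← Complex.exp_add]
              congr 1
              ring
            calc Complex.exp (c * t) *
                  ((Complex.exp ((-c) * t) - Complex.exp ((-c) * s)) / (-c))
                = (Complex.exp (c * t) * Complex.exp ((-c) * t)
                   - Complex.exp (c * t) * Complex.exp ((-c) * s)) / (-c) := by
                  ring
              _ = (1 - Complex.exp (c * ((t:ℂ) - s))) / (-c) := by rw [e1, e2]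
              _ = (Complex.exp (c * ((t:ℂ) - s)) - 1) / c := by
                  rw [div_neg, ← neg_div, neg_sub]
    rw [L1, L4, L5]
  -- split the integral
  have hqt : (∫ s in Ioc (-Tm) t, (starRingEnd ℂ) (q' s)) = (starRingEnd ℂ) (q t) := by
    rw [integral_conj, ← intervalIntegral.integral_of_le ht1, ← hrep t]
  have hsplit : (∫ s in Ioc (-Tm) t,
        (starRingEnd ℂ) (q' s) * ((Complex.exp (c * ((t:ℂ) - s)) - 1) / c))
      = (J - (starRingEnd ℂ) (q t)) * c⁻¹ := by
    have h1 : ∀ s : ℝ, (starRingEnd ℂ) (q' s) * ((Complex.exp (c * ((t:ℂ) - s)) - 1) / c)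
        = ((starRingEnd ℂ) (q' s) * Complex.exp (c * ((t:ℂ) - s))) * c⁻¹
          - (starRingEnd ℂ) (q' s) * c⁻¹ := by
      intro s
      field_simp
    simp only [h1]
    rw [integral_sub (hJint.mul_const _) (hq'conj.restrict.mul_const _),
      integral_mul_const, integral_mul_const, hqt, hJ]
    ring
  -- norm bound on J
  have hnormJ : ‖J‖ ≤ ∫ u, ‖q' u‖ := by
    calc ‖J‖ ≤ ∫ s in Ioc (-Tm) t, ‖(starRingEnd ℂ) (q' s) * Complex.exp (c * ((t:ℂ) - s))‖ :=
          norm_integral_le_integral_norm _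
      _ ≤ ∫ s in Ioc (-Tm) t, ‖q' s‖ := by
          apply setIntegral_mono_on hJint.norm hq'.norm.restrict measurableSet_Ioc
          intro s hs
          rw [norm_mul, RCLike.norm_conj]
          exact mul_le_of_le_one_right (norm_nonneg _) (hEnorm s hs.2)
      _ ≤ ∫ u, ‖q' u‖ := setIntegral_le_integral hq'.norm
            (Filter.Eventually.of_forall fun x => norm_nonneg _)
  -- finish
  rw [intervalIntegral.integral_of_le ht1, key, hsplit]
  rw [norm_mul, norm_inv, hcabs]
  have habs : 0 < ‖ζ‖ := by
    simpa [norm_pos_iff] using hζ0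
  have hnorm2 : ‖J - (starRingEnd ℂ) (q t)‖ ≤ (∫ u, ‖q' u‖) + M := by
    calc ‖J - (starRingEnd ℂ) (q t)‖ ≤ ‖J‖ + ‖(starRingEnd ℂ) (q t)‖ := norm_sub_le _ _
      _ ≤ (∫ u, ‖q' u‖) + M := by
          rw [RCLike.norm_conj]
          exact add_le_add hnormJ (hqsup t)
  calc ‖ζ‖ * (‖J - (starRingEnd ℂ) (q t)‖ * (2 * ‖ζ‖)⁻¹)
      ≤ ‖ζ‖ * (((∫ u, ‖q' u‖) + M) * (2 * ‖ζ‖)⁻¹) := by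
        apply mul_le_mul_of_nonneg_left _ habs.le
        apply mul_le_mul_of_nonneg_right hnorm2
        positivity
    _ = (1/2) * M + (1/2) * ∫ u, ‖q' u‖ := by
        field_simp
        ring


/-- Let `q : ℝ → ℂ` be integrable, of bounded variation (absolutely continuous
with derivative `q' ∈ L¹`), supported in `Ω = [-T₋,T₊]` and vanishing at the endpoints.
With `D = ½‖q‖_∞ + ‖q‖₁ + ½‖q'‖₁`, for every `ζ` with `Im ζ ≥ 0` and every `t ∈ Ω`,
`|∫_{-T₋}^t q*(y) e^{2iζ(t-y)} dy| ≤ D/(1+|ζ|)`. -/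
theorem Phi2_decay_bound_BV
    (Tm Tp : ℝ) (hTm : 0 ≤ Tm) (hTp : 0 ≤ Tp)
    (q q' : ℝ → ℂ) (hq : Integrable q) (hq' : Integrable q')
    (hsupp : Function.support q ⊆ Icc (-Tm) Tp)
    (hrep : ∀ t : ℝ, q t = ∫ s in (-Tm)..t, q' s)
    (hend : q (-Tm) = 0 ∧ q Tp = 0)
    (D : ℝ)
    (hD : D = (1 / 2) * (eLpNorm q ⊤ volume).toReal + (∫ t, ‖q t‖)
            + (1 / 2) * ∫ t, ‖q' t‖) :
    ∀ ζ : ℂ, 0 ≤ ζ.im → ∀ t ∈ Icc (-Tm) Tp,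
      ‖∫ y in (-Tm)..t, (starRingEnd ℂ) (q y) * Complex.exp (2 * Complex.I * ζ * (t - y))‖
        ≤ D / (1 + ‖ζ‖) := by
  -- continuity and sup bound
  have hqc : Continuous q := by
    have hfun : q = fun u => ∫ s in (-Tm)..u, q' s := funext hrep
    rw [hfun]; exact hq'.continuous_primitive (-Tm)
  have hcs : HasCompactSupport q :=
    HasCompactSupport.intro isCompact_Icc (fun x hx => Function.notMem_support.mp (fun h => hx (hsupp h)))
  have hMlt : eLpNorm q ⊤ volume < ⊤ :=
    (hqc.memLp_top_of_hasCompactSupport hcs volume).2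
  set M : ℝ := (eLpNorm q ⊤ volume).toReal with hMdef
  have hqsup : ∀ u : ℝ, ‖q u‖ ≤ M := by
    intro u
    by_contra hcon
    push_neg at hcon
    have hae : ∀ᵐ x, ‖q x‖ ≤ M := by
      filter_upwards [ae_le_eLpNormEssSup (f := q) (μ := volume)] with x hx
      have h2 : (‖q x‖₊ : ℝ≥0∞) ≤ eLpNorm q ⊤ volume := by
        rw [eLpNorm_exponent_top]; exact hx
      have := ENNReal.toReal_mono hMlt.ne h2
      rw [hMdef, eLpNorm_exponent_top]; simpa using this
    have hopen : IsOpen {x : ℝ | M < ‖q x‖} := isOpen_lt continuous_const hqc.norm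
    have hpos : 0 < volume {x : ℝ | M < ‖q x‖} := hopen.measure_pos volume ⟨u, hcon⟩
    have hz : volume {x : ℝ | M < ‖q x‖} = 0 :=
      measure_mono_null (fun x (hx : M < ‖q x‖) => not_le.mpr hx) (ae_iff.mp hae)
    exact hpos.ne' hz
  intro ζ hζim t ht
  obtain ⟨ht1, ht2⟩ := ht
  set c : ℂ := 2 * Complex.I * ζ with hc
  -- norm of exponential
  have hre : ∀ y : ℝ, (c * ((t : ℂ) - y)).re = -2 * ζ.im * (t - y) := by
    intro y
    simp [hc, Complex.mul_re, Complex.mul_im]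
  have hEnorm : ∀ y : ℝ, y ≤ t → ‖Complex.exp (c * ((t : ℂ) - y))‖ ≤ 1 := by
    intro y hy
    rw [Complex.norm_exp, hre]
    exact Real.exp_le_one_iff.mpr (by nlinarith)
  have hEcont : Continuous fun y : ℝ => Complex.exp (c * ((t : ℂ) - y)) := by
    continuity
  -- the integral in interval form = restricted form
  have hIoc : (∫ y in (-Tm)..t, (starRingEnd ℂ) (q y) * Complex.exp (c * ((t : ℂ) - y)))
      = ∫ y in Ioc (-Tm) t, (starRingEnd ℂ) (q y) * Complex.exp (c * ((t : ℂ) - y)) :=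
    intervalIntegral.integral_of_le ht1
  -- Bound 1
  have hb1 : ‖∫ y in (-Tm)..t, (starRingEnd ℂ) (q y) * Complex.exp (c * ((t : ℂ) - y))‖
      ≤ ∫ u, ‖q u‖ := by
    calc ‖∫ y in (-Tm)..t, (starRingEnd ℂ) (q y) * Complex.exp (c * ((t : ℂ) - y))‖
        ≤ ∫ y in (-Tm)..t, ‖(starRingEnd ℂ) (q y) * Complex.exp (c * ((t : ℂ) - y))‖ :=
          intervalIntegral.norm_integral_le_integral_norm ht1
      _ ≤ ∫ y in (-Tm)..t, ‖q y‖ := by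
          apply intervalIntegral.integral_mono_on ht1
          · exact ((hqc.norm.mul hEcont.norm).congr (by
              intro y; simp [norm_mul])).intervalIntegrable _ _
          · exact hqc.norm.intervalIntegrable _ _
          · intro y hy
            rw [norm_mul, RCLike.norm_conj]
            calc ‖q y‖ * ‖Complex.exp (c * ((t : ℂ) - y))‖ ≤ ‖q y‖ * 1 :=
                  mul_le_mul_of_nonneg_left (hEnorm y hy.2) (norm_nonneg _)
              _ = ‖q y‖ := mul_one _
      _ = ∫ y in Ioc (-Tm) t, ‖q y‖ := intervalIntegral.integral_of_le ht1
      _ ≤ ∫ u, ‖q u‖ := setIntegral_le_integral hq.norm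
            (Filter.Eventually.of_forall fun x => norm_nonneg _)
  -- Bound 2, for ζ ≠ 0
  have hb2 : ∀ _ : ζ ≠ 0,
      ‖ζ‖ * ‖∫ y in (-Tm)..t, (starRingEnd ℂ) (q y) * Complex.exp (c * ((t : ℂ) - y))‖
        ≤ (1/2) * M + (1/2) * ∫ u, ‖q' u‖ := fun hζ0 =>
    Phi2_aux Tm Tp q q' hq hq' hrep M hqsup ζ hζim t ht1 c hc (Ioc (-Tm) t) rfl
      hre hEnorm hEcont hζ0
  -- combine
  have hpos : (0:ℝ) < 1 + ‖ζ‖ := by positivity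
  rw [le_div_iff₀ hpos]
  rcases eq_or_ne ζ 0 with hζ0 | hζ0
  · rw [hζ0]
    simp only [norm_zero, add_zero, mul_one]
    calc ‖∫ y in (-Tm)..t, (starRingEnd ℂ) (q y) * Complex.exp (c * ((t : ℂ) - y))‖
        ≤ ∫ u, ‖q u‖ := hb1
      _ ≤ D := by
          rw [hD]
          have h1 : 0 ≤ M := ENNReal.toReal_nonneg
          have h2 : 0 ≤ ∫ u, ‖q' u‖ := integral_nonneg fun u => norm_nonneg _
          linarith
  · have h2 := hb2 hζ0
    rw [hD]
    have h3 : ‖∫ y in (-Tm)..t, (starRingEnd ℂ) (q y) * Complex.exp (c * ((t : ℂ) - y))‖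
        * (1 + ‖ζ‖)
        = ‖∫ y in (-Tm)..t, (starRingEnd ℂ) (q y) * Complex.exp (c * ((t : ℂ) - y))‖
          + ‖ζ‖ * ‖∫ y in (-Tm)..t, (starRingEnd ℂ) (q y) * Complex.exp (c * ((t : ℂ) - y))‖ := by
      ring
    rw [h3]
    linarith
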